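/- arXiv:2201.13333 — 2 statements merged into one kernel-verified Lean document; each statement's English description precedes it below -/
import Mathlib

section
/- Let n ≥ 2 and α ∈ ℝ. Define the n × n complex scattering matrix S by: S_{1,1} = e^{iα}/2, S_{m,m} = 1/2 for 2 ≤ m ≤ n, S_{m+1,m} = -1/2 for 1 ≤ m ≤ n-1, S_{1,n} = -1/2, and all other entries zero. Then perm S = (e^{iα} + (-1)^n) / 2^n. -/
open Complex

noncomputable def perm {n : ℕ} (S : Matrix (Fin n) (Fin n) ℂ) : ℂ :=
  ∑ σ : Equiv.Perm (Fin n), ∏ i, S i (σ i)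

theorem stmt_2 (n : ℕ) (hn : 2 ≤ n) (α : ℝ)
    (S : Matrix (Fin n) (Fin n) ℂ)
    (h11 : ∀ i j : Fin n, (i : ℕ) = 0 → (j : ℕ) = 0 → S i j = Complex.exp (α * I) / 2)
    (hdiag : ∀ i j : Fin n, (i : ℕ) = (j : ℕ) → (i : ℕ) ≠ 0 → S i j = 1/2)
    (hsub : ∀ i j : Fin n, (i : ℕ) = (j : ℕ) + 1 → S i j = -(1/2))
    (hcorner : ∀ i j : Fin n, (i : ℕ) = 0 → (j : ℕ) = n - 1 → S i j = -(1/2))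
    (hzero : ∀ i j : Fin n, (i : ℕ) ≠ (j : ℕ) → (i : ℕ) ≠ (j : ℕ) + 1 →
      ¬((i : ℕ) = 0 ∧ (j : ℕ) = n - 1) → S i j = 0) :
    perm S = (Complex.exp (α * I) + (-1 : ℂ) ^ n) / 2 ^ n := by
  haveI : NeZero n := ⟨by omega⟩
  -- value of subtraction by one in Fin n
  have hsub1 : ∀ i : Fin n, ((i - 1 : Fin n) : ℕ) = if (i : ℕ) = 0 then n - 1 else (i : ℕ) - 1 := by
    intro i
    have h1 : ((1 : Fin n) : ℕ) = 1 := by rw [Fin.val_one']; exact Nat.mod_eq_of_lt (by omega)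
    rw [Fin.sub_def]
    simp only [h1]
    have hilt : (i : ℕ) < n := i.isLt
    split_ifs with h
    · rw [h]; simp
    · have : (n - 1) + (i : ℕ) = n + ((i : ℕ) - 1) := by omega
      rw [this, Nat.add_mod_left]
      exact Nat.mod_eq_of_lt (by omega)
  set σc : Equiv.Perm (Fin n) := Equiv.subRight (1 : Fin n) with hσc
  have hσcapp : ∀ i : Fin n, σc i = i - 1 := fun i => rfl
  have hσc0 : ((σc 0 : Fin n) : ℕ) = n - 1 := by
    rw [hσcapp, hsub1]; simp
  have hone_ne : (1 : Equiv.Perm (Fin n)) ≠ σc := by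
    intro h
    have := congrArg (fun σ : Equiv.Perm (Fin n) => ((σ 0 : Fin n) : ℕ)) h
    simp only [Equiv.Perm.one_apply] at this
    rw [hσc0] at this
    simp at this
    omega
  -- everything outside {1, σc} vanishes
  have hvanish : ∀ σ : Equiv.Perm (Fin n), σ ≠ 1 → σ ≠ σc → (∏ i, S i (σ i)) = 0 := by
    intro σ hσ1 hσ2
    by_contra hprod
    have hne : ∀ i : Fin n, S i (σ i) ≠ 0 := by
      intro i h
      exact hprod (Finset.prod_eq_zero (Finset.mem_univ i) h)
    have hopts : ∀ i : Fin n, ((σ i : Fin n) : ℕ) = (i : ℕ) ∨ (i : ℕ) = ((σ i : Fin n) : ℕ) + 1 ∨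
        ((i : ℕ) = 0 ∧ ((σ i : Fin n) : ℕ) = n - 1) := by
      intro i
      by_contra h
      push_neg at h
      exact hne i (hzero i (σ i) (Ne.symm h.1) h.2.1 (by
        intro hc; exact (h.2.2 hc.1) hc.2))
    rcases hopts 0 with h0 | h0 | h0
    · -- σ 0 = 0, show σ = 1
      simp only [Fin.val_zero] at h0
      have key : ∀ k, ∀ i : Fin n, (i : ℕ) ≤ k → σ i = i := by
        intro k
        induction k with
        | zero =>
          intro i hi
          have hi0 : i = 0 := by
            apply Fin.ext; simpa using Nat.le_zero.mp hi
          rw [hi0]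
          apply Fin.ext; simpa using h0
        | succ k ih =>
          intro i hi
          by_cases h : (i : ℕ) ≤ k
          · exact ih i h
          have hik : (i : ℕ) = k + 1 := by omega
          rcases hopts i with h1 | h2 | h3
          · exact Fin.ext h1
          · have hk : k < n := by have := i.isLt; omega
            set j : Fin n := ⟨k, hk⟩ with hj
            have hjj : σ j = j := ih j (le_refl k)
            have hij : σ i = j := Fin.ext (by simp [hj]; omega)
            have := σ.injective (hij.trans hjj.symm)
            rw [this] at hik
            simp [hj] at hik
          · omega
      exact hσ1 (Equiv.ext fun i => key n i (le_of_lt i.isLt))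
    · simp only [Fin.val_zero] at h0; omega
    · -- σ 0 has value n - 1, show σ = σc
      have h0' : ((σ 0 : Fin n) : ℕ) = n - 1 := h0.2
      have key : ∀ k, ∀ i : Fin n, n - 1 - k ≤ (i : ℕ) → (i : ℕ) ≠ 0 →
          ((σ i : Fin n) : ℕ) = (i : ℕ) - 1 := by
        intro k
        induction k with
        | zero =>
          intro i hi hi0
          have hin : (i : ℕ) = n - 1 := by have := i.isLt; omega
          rcases hopts i with h1 | h2 | h3
          · exfalso
            have : σ i = σ 0 := Fin.ext (by omega)
            have := σ.injective this
            rw [this] at hi0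
            simp at hi0
          · omega
          · exact absurd h3.1 hi0
        | succ k ih =>
          intro i hi hi0
          by_cases h : n - 1 - k ≤ (i : ℕ)
          · exact ih i h hi0
          have hik : (i : ℕ) = n - 1 - k - 1 := by omega
          rcases hopts i with h1 | h2 | h3
          · exfalso
            have hjlt : (i : ℕ) + 1 < n := by omega
            set j : Fin n := ⟨(i : ℕ) + 1, hjlt⟩ with hj
            have hjv : ((σ j : Fin n) : ℕ) = (i : ℕ) := by
              have := ih j (by simp [hj]; omega) (by simp [hj])
              simpa [hj] using this
            have : σ j = σ i := Fin.ext (by rw [hjv, h1])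
            have := σ.injective this
            have : ((j : Fin n) : ℕ) = (i : ℕ) := by rw [this]
            simp [hj] at this
          · omega
          · exact absurd h3.1 hi0
      apply hσ2
      apply Equiv.ext
      intro i
      apply Fin.ext
      rw [hσcapp, hsub1]
      by_cases hi0 : (i : ℕ) = 0
      · have : i = 0 := Fin.ext (by simpa using hi0)
        rw [if_pos hi0, this, h0']
      · rw [if_neg hi0]
        exact key n i (by omega) hi0
  -- reduce sum to the two contributing permutations
  have hpair : perm S = (∏ i, S i ((1 : Equiv.Perm (Fin n)) i)) + ∏ i, S i (σc i) := by
    rw [perm, ← Finset.sum_subset (Finset.subset_univ ({1, σc} : Finset (Equiv.Perm (Fin n))))]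
    · rw [Finset.sum_pair hone_ne]
    · intro σ _ hσ
      simp only [Finset.mem_insert, Finset.mem_singleton] at hσ
      push_neg at hσ
      exact hvanish σ hσ.1 hσ.2
  -- identity product
  have hid : (∏ i, S i ((1 : Equiv.Perm (Fin n)) i)) = Complex.exp (α * I) / 2 * (1/2 : ℂ) ^ (n - 1) := by
    simp only [Equiv.Perm.one_apply]
    rw [← Finset.mul_prod_erase Finset.univ _ (Finset.mem_univ (0 : Fin n))]
    have h0 : S 0 0 = Complex.exp (α * I) / 2 := h11 0 0 (by simp) (by simp)
    rw [h0]
    congr 1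
    rw [Finset.prod_congr rfl (fun i hi => hdiag i i rfl (by
      simp only [Finset.mem_erase, Finset.mem_univ, and_true] at hi
      intro hc
      exact hi (Fin.ext (by simpa using hc))))]
    rw [Finset.prod_const, Finset.card_erase_of_mem (Finset.mem_univ _)]
    simp
  -- cyclic product
  have hcyc : (∏ i, S i (σc i)) = (-(1/2) : ℂ) ^ n := by
    have hconst : ∀ i : Fin n, S i (σc i) = -(1/2 : ℂ) := by
      intro i
      rw [hσcapp]
      by_cases hi0 : (i : ℕ) = 0
      · exact hcorner i (i - 1) hi0 (by rw [hsub1, if_pos hi0])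
      · exact hsub i (i - 1) (by rw [hsub1, if_neg hi0]; omega)
    rw [Finset.prod_congr rfl (fun i _ => hconst i), Finset.prod_const]
    simp
  rw [hpair, hid, hcyc]
  have hpow : (2 : ℂ) ^ n = 2 * 2 ^ (n - 1) := by
    rw [← pow_succ']
    congr 1
    omega
  have h1 : Complex.exp (α * I) / 2 * (1/2 : ℂ) ^ (n - 1) = Complex.exp (α * I) / 2 ^ n := by
    rw [div_pow, one_pow, div_mul_div_comm, mul_one, ← hpow]
  have h2 : (-(1/2) : ℂ) ^ n = (-1 : ℂ) ^ n / 2 ^ n := by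
    rw [show (-(1/2) : ℂ) = (-1) / 2 by norm_num, div_pow]
  rw [h1, h2, ← add_div]
end

section
/- Let n ≥ 2 and α ∈ ℝ, and let S be the n × n matrix with S_{1,1} = e^{iα}/2, S_{m,m} = 1/2 for m ≥ 2, S_{m+1,m} = -1/2 for 1 ≤ m ≤ n-1, S_{1,n} = -1/2, zero elsewhere. Then |perm S|² = (1 + (-1)^n cos α) / 2^{2n-1}. -/
open Complex

lemma finRotate_symm_val {n : ℕ} (hn : 2 ≤ n) (j : Fin n) :
    (((finRotate n).symm j : Fin n) : ℕ) = if (j : ℕ) = 0 then n - 1 else (j : ℕ) - 1 := by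
  obtain ⟨k, rfl⟩ : ∃ k, n = k + 2 := ⟨n - 2, by omega⟩
  set m := (finRotate (k + 2)).symm j with hm
  have h1 : finRotate (k + 2) m = j := Equiv.apply_symm_apply _ _
  rw [finRotate_succ_apply] at h1
  have h2 : ((m + 1 : Fin (k + 2)) : ℕ) = ((m : ℕ) + 1) % (k + 2) := by
    simp [Fin.add_def]
  have hj : (j : ℕ) = ((m : ℕ) + 1) % (k + 2) := by rw [← h2, h1]
  have hmlt : (m : ℕ) < k + 2 := m.isLt
  rcases Nat.lt_or_ge ((m : ℕ) + 1) (k + 2) with h | h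
  · rw [Nat.mod_eq_of_lt h] at hj
    rw [if_neg (by omega)]
    omega
  · have he : (m : ℕ) + 1 = k + 2 := by omega
    rw [he, Nat.mod_self] at hj
    rw [if_pos (by omega)]
    omega

lemma perm_key {n : ℕ} (hn : 2 ≤ n) (σ : Equiv.Perm (Fin n))
    (h : ∀ i : Fin n, (i : ℕ) = (σ i : ℕ) ∨ (i : ℕ) = (σ i : ℕ) + 1 ∨
      ((i : ℕ) = 0 ∧ (σ i : ℕ) = n - 1)) :
    σ = 1 ∨ σ = (finRotate n).symm := by
  have hzero : (0 : ℕ) < n := by omega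
  set z : Fin n := ⟨0, hzero⟩ with hz
  rcases h z with h0 | h0 | h0
  · -- σ z = z case : σ is the identity
    left
    have main : ∀ m : ℕ, ∀ i : Fin n, (i : ℕ) = m → σ i = i := by
      intro m
      induction m using Nat.strong_induction_on with
      | _ m IH =>
        intro i him
        rcases h i with hi | hi | hi
        · exact (Fin.ext hi).symm
        · exfalso
          have hlt : (σ i : ℕ) < m := by omega
          have := IH (σ i : ℕ) hlt (σ i) rfl
          have := σ.injective this
          have : (i : ℕ) = (σ i : ℕ) := by rw [this]
          omega
        · exfalso
          have : i = z := Fin.ext (by simp [hz, hi.1])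
          rw [this] at hi
          omega
    exact Equiv.ext fun i => main (i : ℕ) i rfl
  · exfalso
    have : (z : ℕ) = 0 := rfl
    omega
  · -- corner case : σ is the backward rotation
    right
    have main : ∀ m : ℕ, ∀ i : Fin n, (i : ℕ) = m →
        (σ i : ℕ) = if (i : ℕ) = 0 then n - 1 else (i : ℕ) - 1 := by
      intro m
      induction m using Nat.strong_induction_on with
      | _ m IH =>
        intro i him
        by_cases hi0 : (i : ℕ) = 0
        · have : i = z := Fin.ext (by simp [hz, hi0])
          rw [this, if_pos (by rw [← this, hi0])]
          · exact h0.2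
        · rw [if_neg hi0]
          rcases h i with hi | hi | hi
          · exfalso
            have hlt : (i : ℕ) - 1 < n := by omega
            set jv : Fin n := ⟨(i : ℕ) - 1, hlt⟩ with hjv
            set j : Fin n := σ.symm jv with hjdef
            have hσj : σ j = jv := Equiv.apply_symm_apply _ _
            have hσjv : (σ j : ℕ) = (i : ℕ) - 1 := by rw [hσj]
            rcases h j with hj | hj | hj
            · -- j = σ j = i - 1 : contradiction with IH
              have hjlt : (j : ℕ) < m := by omega
              have := IH (j : ℕ) hjlt j rfl
              by_cases hj0 : (j : ℕ) = 0
              · rw [if_pos hj0] at this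
                have hin : (i : ℕ) < n := i.isLt
                omega
              · rw [if_neg hj0] at this
                omega
            · -- j = σ j + 1 = i : then σ i = i - 1, contradicting σ i = i
              have : j = i := Fin.ext (by omega)
              rw [this] at hσjv
              omega
            · -- j = 0 and σ j = n - 1 : but σ j = i - 1 ≤ n - 2
              have hin : (i : ℕ) < n := i.isLt
              omega
          · omega
          · exact absurd hi.1 hi0
    refine Equiv.ext fun i => Fin.ext ?_
    rw [finRotate_symm_val hn i]
    exact main (i : ℕ) i rfl

theorem stmt_3 (n : ℕ) (hn : 2 ≤ n) (α : ℝ)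
    (S : Matrix (Fin n) (Fin n) ℂ)
    (h11 : ∀ i j : Fin n, (i : ℕ) = 0 → (j : ℕ) = 0 → S i j = Complex.exp (α * I) / 2)
    (hdiag : ∀ i j : Fin n, (i : ℕ) = (j : ℕ) → (i : ℕ) ≠ 0 → S i j = 1/2)
    (hsub : ∀ i j : Fin n, (i : ℕ) = (j : ℕ) + 1 → S i j = -(1/2))
    (hcorner : ∀ i j : Fin n, (i : ℕ) = 0 → (j : ℕ) = n - 1 → S i j = -(1/2))
    (hzero : ∀ i j : Fin n, (i : ℕ) ≠ (j : ℕ) → (i : ℕ) ≠ (j : ℕ) + 1 →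
      ¬((i : ℕ) = 0 ∧ (j : ℕ) = n - 1) → S i j = 0) :
    ‖perm S‖ ^ 2 = (1 + (-1 : ℝ) ^ n * Real.cos α) / 2 ^ (2 * n - 1) := by
  set c := (finRotate n).symm with hc
  have hcval : ∀ j : Fin n, ((c j : Fin n) : ℕ) = if (j : ℕ) = 0 then n - 1 else (j : ℕ) - 1 :=
    fun j => finRotate_symm_val hn j
  have hne : (1 : Equiv.Perm (Fin n)) ≠ c := by
    intro he
    have h1 := hcval ⟨0, by omega⟩
    rw [← he] at h1
    simp only [Equiv.Perm.coe_one, id_eq, if_pos] at h1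
    omega
  have hvanish : ∀ σ : Equiv.Perm (Fin n), σ ∉ ({1, c} : Finset (Equiv.Perm (Fin n))) →
      ∏ i, S i (σ i) = 0 := by
    intro σ hσ
    by_contra hne0
    have hfac : ∀ i : Fin n, S i (σ i) ≠ 0 := by
      intro i hz0
      exact hne0 (Finset.prod_eq_zero (Finset.mem_univ i) hz0)
    have hdisj : ∀ i : Fin n, (i : ℕ) = (σ i : ℕ) ∨ (i : ℕ) = (σ i : ℕ) + 1 ∨
        ((i : ℕ) = 0 ∧ (σ i : ℕ) = n - 1) := by
      intro i
      by_contra hcon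
      push_neg at hcon
      exact hfac i (hzero i (σ i) hcon.1 hcon.2.1 (by tauto))
    rcases perm_key hn σ hdisj with rfl | h'
    · simp at hσ
    · rw [h', ← hc] at hσ
      simp at hσ
  have hsum : perm S = (∏ i, S i ((1 : Equiv.Perm (Fin n)) i)) + (∏ i, S i (c i)) := by
    have hsub2 := Finset.sum_subset (Finset.subset_univ ({1, c} : Finset (Equiv.Perm (Fin n))))
      (fun σ _ hσ => hvanish σ hσ)
    unfold perm
    rw [← hsub2, Finset.sum_pair hne]
  obtain ⟨k, rfl⟩ : ∃ k, n = k + 2 := ⟨n - 2, by omega⟩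
  have hid : (∏ i : Fin (k + 2), S i i) = Complex.exp (α * I) / 2 * (1/2 : ℂ) ^ (k + 1) := by
    rw [Fin.prod_univ_succ]
    congr 1
    · exact h11 0 0 rfl rfl
    · calc ∏ i : Fin (k + 1), S i.succ i.succ
          = ∏ _i : Fin (k + 1), (1/2 : ℂ) :=
            Finset.prod_congr rfl (fun i _ => hdiag i.succ i.succ rfl (by simp [Fin.val_succ]))
        _ = (1/2 : ℂ) ^ (k + 1) := by simp [Finset.prod_const]
  have hcyc : (∏ i : Fin (k + 2), S i (c i)) = (-(1/2) : ℂ) ^ (k + 2) := by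
    have hfac : ∀ i : Fin (k + 2), S i (c i) = -(1/2) := by
      intro i
      by_cases hi : (i : ℕ) = 0
      · exact hcorner i (c i) hi (by rw [hcval i, if_pos hi])
      · refine hsub i (c i) ?_
        rw [hcval i, if_neg hi]
        omega
    rw [Finset.prod_congr rfl (fun i _ => hfac i), Finset.prod_const]
    simp
  have h1app : (∏ i : Fin (k + 2), S i ((1 : Equiv.Perm (Fin (k + 2))) i)) = ∏ i, S i i := by
    simp
  rw [hsum, h1app, hid, hcyc]
  have h2 : (2 : ℂ) ^ (k + 2) ≠ 0 := pow_ne_zero _ two_ne_zero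
  have hzeq : Complex.exp (α * I) / 2 * (1/2 : ℂ) ^ (k + 1) + (-(1/2) : ℂ) ^ (k + 2)
      = (Complex.exp (α * I) + (-1) ^ (k + 2)) / 2 ^ (k + 2) := by
    have e1 : (-(1/2) : ℂ) ^ (k + 2) = (-1 : ℂ) ^ (k + 2) / 2 ^ (k + 2) := by
      rw [← div_pow]; norm_num
    have e2 : (1/2 : ℂ) ^ (k + 1) = 1 / 2 ^ (k + 1) := by
      rw [div_pow, one_pow]
    rw [e1, e2, div_mul_div_comm, mul_one]
    have e3 : (2 : ℂ) * 2 ^ (k + 1) = 2 ^ (k + 2) := by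
      ring
    rw [e3, ← add_div]
  rw [hzeq]
  have hw : Complex.exp (α * I) + (-1 : ℂ) ^ (k + 2)
      = Complex.ofReal (Real.cos α + (-1 : ℝ) ^ (k + 2)) + Complex.ofReal (Real.sin α) * I := by
    rw [Complex.exp_mul_I]
    push_cast
    rw [← Complex.ofReal_cos, ← Complex.ofReal_sin]
    push_cast
    ring
  have habs : ‖(Complex.exp (α * I) + (-1 : ℂ) ^ (k + 2)) / 2 ^ (k + 2)‖ ^ 2
      = ((Real.cos α + (-1 : ℝ) ^ (k + 2)) ^ 2 + Real.sin α ^ 2) / (2 : ℝ) ^ (2 * (k + 2)) := by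
    rw [norm_div, div_pow, Complex.sq_norm, hw, Complex.normSq_add_mul_I]
    congr 1
    have : ‖(2 : ℂ) ^ (k + 2)‖ = (2 : ℝ) ^ (k + 2) := by
      rw [norm_pow, Complex.norm_two]
    rw [this, ← pow_mul, mul_comm (k + 2) 2]
  rw [habs]
  have hexp : 2 * (k + 2) - 1 = 2 * k + 3 := by omega
  have hexp2 : 2 * (k + 2) = 2 * k + 4 := by omega
  rw [hexp, hexp2]
  have ha2 : ((-1 : ℝ) ^ (k + 2)) ^ 2 = 1 := by
    rw [← pow_mul, mul_comm, pow_mul]; norm_num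
  have hsc : Real.sin α ^ 2 + Real.cos α ^ 2 = 1 := Real.sin_sq_add_cos_sq α
  have hd1 : (0 : ℝ) < 2 ^ (2 * k + 4) := by positivity
  have hd2 : (0 : ℝ) < 2 ^ (2 * k + 3) := by positivity
  rw [div_eq_div_iff hd1.ne' hd2.ne']
  have hp : (2 : ℝ) ^ (2 * k + 4) = 2 * 2 ^ (2 * k + 3) := by
    rw [pow_succ, mul_comm]
  rw [hp]
  linear_combination (2 : ℝ) ^ (2 * k + 3) * hsc + (2 : ℝ) ^ (2 * k + 3) * ha2
end
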